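/- A functor F : C → D between categories is an inclusion of a cofactor if and only if F is fully faithful, injective on isomorphism classes of objects, and has the property that for any morphism g : d → d' in D, if either d or d' is isomorphic to an object in the image of F, then g is isomorphic (in the arrow category) to the image of a morphism of C; equivalently, every solid square [0] → C, [1] → D over F, with [0] → [1] either of the two inclusions, admits a diagonal filler. -/

import Mathlib

open CategoryTheory

universe v u

/-- A functor `F : C ⥤ D` is an inclusion of a cofactor if there is a
category `E` and an equivalence `C ⊕ E ≌ D` under `C`. -/
def IsCofactorInclusion {C D : Type u} [Category.{v} C] [Category.{v} D]
    (F : C ⥤ D) : Prop :=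
  ∃ (E : Type u) (iE : Category.{v} E),
    letI := iE
    ∃ e : (C ⊕ E) ≌ D, Nonempty (Sum.inl_ C E ⋙ e.functor ≅ F)

/-- Naturally isomorphic functors give isomorphic arrows. -/
def arrowIsoOfNatIso {C D : Type*} [Category C] [Category D] {F G : C ⥤ D}
    (i : F ≅ G) {X Y : C} (u : X ⟶ Y) :
    Arrow.mk (F.map u) ≅ Arrow.mk (G.map u) :=
  Arrow.isoMk (i.app X) (i.app Y) (i.hom.naturality u).symm

/-- Any morphism in a sum category whose source or target is isomorphic to an
object of the left component is the image of a morphism of the left component. -/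
lemma sum_arrow_left {C E : Type u} [Category.{v} C] [Category.{v} E] {p q : C ⊕ E}
    (φ : p ⟶ q)
    (h : (∃ X : C, Nonempty ((Sum.inl X : C ⊕ E) ≅ p)) ∨
      (∃ X : C, Nonempty ((Sum.inl X : C ⊕ E) ≅ q))) :
    ∃ (c c' : C) (u : c ⟶ c'),
      Nonempty (Arrow.mk ((Sum.inl_ C E).map u) ≅ Arrow.mk φ) := by
  cases p with
  | inl c =>
    cases q with
    | inl c' => exact ⟨c, c', φ.down, ⟨Iso.refl _⟩⟩
    | inr x => exact (φ : PEmpty).elim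
  | inr x =>
    rcases h with ⟨X, ⟨β⟩⟩ | ⟨X, ⟨β⟩⟩
    · exact (β.hom : PEmpty).elim
    · cases q with
      | inl c' => exact (φ : PEmpty).elim
      | inr x' => exact (β.hom : PEmpty).elim

/-- A functor is an inclusion of a cofactor iff it is fully faithful,
injective on isomorphism classes of objects, and every morphism of `D` whose
source or target is isomorphic to an object in the image is isomorphic in the
arrow category to the image of a morphism of `C`. -/
theorem statement12 {C D : Type u} [Category.{v} C] [Category.{v} D]
    (F : C ⥤ D) :
    IsCofactorInclusion F ↔
      (F.Full ∧ F.Faithful ∧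
        (∀ X Y : C, Nonempty (F.obj X ≅ F.obj Y) → Nonempty (X ≅ Y)) ∧
        ∀ (d d' : D) (g : d ⟶ d'),
          ((∃ X : C, Nonempty (F.obj X ≅ d)) ∨
            (∃ X : C, Nonempty (F.obj X ≅ d'))) →
          ∃ (X Y : C) (u : X ⟶ Y),
            Nonempty (Arrow.mk (F.map u) ≅ Arrow.mk g)) := by
  constructor
  · rintro ⟨E, iE, e, ⟨i⟩⟩
    haveI : (Sum.inl_ C E).Full := ⟨fun f => ⟨f.down, rfl⟩⟩
    haveI : (Sum.inl_ C E).Faithful := ⟨fun h => congrArg ULift.down h⟩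
    haveI hFull : F.Full := Functor.Full.of_iso i
    haveI hFaithful : F.Faithful := Functor.Faithful.of_iso i
    refine ⟨hFull, hFaithful, fun X Y ⟨α⟩ => ⟨F.preimageIso α⟩, ?_⟩
    intro d d' g h
    -- transport the hypothesis to the sum category
    have h' : (∃ X : C, Nonempty ((Sum.inl X : C ⊕ E) ≅ e.inverse.obj d)) ∨
        (∃ X : C, Nonempty ((Sum.inl X : C ⊕ E) ≅ e.inverse.obj d')) := by
      rcases h with ⟨X, ⟨α⟩⟩ | ⟨X, ⟨α⟩⟩
      · exact Or.inl ⟨X, ⟨e.unitIso.app _ ≪≫ e.inverse.mapIso (i.app X ≪≫ α)⟩⟩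
      · exact Or.inr ⟨X, ⟨e.unitIso.app _ ≪≫ e.inverse.mapIso (i.app X ≪≫ α)⟩⟩
    obtain ⟨c, c', u, ⟨A⟩⟩ := sum_arrow_left (e.inverse.map g) h'
    refine ⟨c, c', u, ⟨?_⟩⟩
    calc Arrow.mk (F.map u)
        ≅ Arrow.mk ((Sum.inl_ C E ⋙ e.functor).map u) := (arrowIsoOfNatIso i u).symm
      _ ≅ Arrow.mk (e.functor.map (e.inverse.map g)) := e.functor.mapArrow.mapIso A
      _ ≅ Arrow.mk g :=
        Arrow.isoMk (e.counitIso.app d) (e.counitIso.app d')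
          ((e.counitIso.hom.naturality g).symm)
  · rintro ⟨hFull, hFaithful, _, hArr⟩
    classical
    set P : D → Prop := fun d => ¬ ∃ X : C, Nonempty (F.obj X ≅ d) with hP
    let G : C ⊕ ObjectProperty.FullSubcategory P ⥤ D := F.sum' (ObjectProperty.ι P)
    haveI : G.Faithful := by
      constructor
      rintro (a | x) (b | y) f g h
      · exact ULift.ext _ _ (hFaithful.map_injective h)
      · exact f.elim
      · exact f.elim
      · exact ULift.ext _ _ (InducedCategory.hom_ext h)
    haveI : G.Full := by
      constructor
      rintro (a | x) (b | y) φ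
      · exact ⟨ULift.up (hFull.map_surjective φ |>.choose), hFull.map_surjective φ |>.choose_spec⟩
      · -- φ : F.obj a ⟶ y.obj, impossible since y is not iso to the image
        exfalso
        obtain ⟨X, Y, u, ⟨A⟩⟩ := hArr _ _ φ (Or.inl ⟨a, ⟨Iso.refl _⟩⟩)
        exact y.property ⟨Y, ⟨Arrow.rightFunc.mapIso A⟩⟩
      · exfalso
        obtain ⟨X, Y, u, ⟨A⟩⟩ := hArr _ _ φ (Or.inr ⟨b, ⟨Iso.refl _⟩⟩)
        exact x.property ⟨X, ⟨Arrow.leftFunc.mapIso A⟩⟩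
      · exact ⟨ULift.up ⟨φ⟩, rfl⟩
    haveI : G.EssSurj := by
      constructor
      intro d
      by_cases hd : ∃ X : C, Nonempty (F.obj X ≅ d)
      · obtain ⟨X, ⟨α⟩⟩ := hd
        exact ⟨Sum.inl X, ⟨α⟩⟩
      · exact ⟨Sum.inr ⟨d, hd⟩, ⟨Iso.refl _⟩⟩
    haveI : G.IsEquivalence := {}
    exact ⟨ObjectProperty.FullSubcategory P, inferInstance, G.asEquivalence,
      ⟨Functor.inlCompSum' F (ObjectProperty.ι P)⟩⟩
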